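/- Every automorphism of the ω-Lie algebra L₁ is an ω-automorphism: if σ : ℂ³ → ℂ³ is a ℂ-linear bijection with σ[u,v] = [σ(u),σ(v)] for all u,v ∈ ℂ³, then ω(σ(u),σ(v)) = ω(u,v) for all u,v ∈ ℂ³. Hence Aut_ω(L₁) = Aut(L₁). -/

import Mathlib

noncomputable section

/-- The underlying space ℂ³ of the ω-Lie algebra L₁. -/
abbrev V3 : Type := Fin 3 → ℂ

/-- The basis vector x = e₁. -/
def vx : V3 := ![1, 0, 0]

/-- The basis vector y = e₂. -/
def vy : V3 := ![0, 1, 0]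

/-- The basis vector z = e₃. -/
def vz : V3 := ![0, 0, 1]

/-- Every automorphism of the ω-Lie algebra L₁ (with `[x,y] = y`,
`[x,z] = 0`, `[y,z] = z`, `ω(x,y) = 1`, `ω(x,z) = ω(y,z) = 0`) is an ω-automorphism;
hence `Aut_ω(L₁) = Aut(L₁)`. -/
theorem every_automorphism_of_L1_is_omega_automorphism
    (b : V3 →ₗ[ℂ] V3 →ₗ[ℂ] V3) (w : V3 →ₗ[ℂ] V3 →ₗ[ℂ] ℂ)
    (hskew : ∀ u v : V3, b u v = - b v u)
    (hwskew : ∀ u v : V3, w u v = - w v u)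
    (hxy : b vx vy = vy) (hxz : b vx vz = 0) (hyz : b vy vz = vz)
    (hwxy : w vx vy = 1) (hwxz : w vx vz = 0) (hwyz : w vy vz = 0)
    (σ : V3 ≃ₗ[ℂ] V3)
    (hσ : ∀ u v : V3, σ (b u v) = b (σ u) (σ v)) :
    ∀ u v : V3, w (σ u) (σ v) = w u v := by
  -- decomposition
  have decomp : ∀ u : V3, u = u 0 • vx + u 1 • vy + u 2 • vz := by
    intro u; funext i; fin_cases i <;> simp [vx, vy, vz]
  have bself : ∀ u : V3, b u u = 0 := by
    intro u
    have h := hskew u u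
    have h2 : (2:ℂ) • b u u = 0 := by rw [two_smul]; nth_rewrite 2 [h]; simp
    simpa using (smul_eq_zero.mp h2).resolve_left (by norm_num)
  have hyx : b vy vx = -vy := by rw [hskew, hxy]
  have hzx : b vz vx = 0 := by rw [hskew, hxz]; simp
  have hzy : b vz vy = -vz := by rw [hskew, hyz]
  -- bracket formula
  have hb : ∀ u v : V3, b u v = (u 0 * v 1 - u 1 * v 0) • vy + (u 1 * v 2 - u 2 * v 1) • vz := by
    intro u v
    have h1 : b u v = b (u 0 • vx + u 1 • vy + u 2 • vz) (v 0 • vx + v 1 • vy + v 2 • vz) := by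
      rw [← decomp, ← decomp]
    rw [h1]
    simp only [map_add, map_smul, LinearMap.add_apply, LinearMap.smul_apply,
      hxy, hxz, hyz, hyx, hzx, hzy, bself]
    module
  -- omega formula
  have hwyx : w vy vx = -1 := by rw [hwskew, hwxy]
  have hwzx : w vz vx = 0 := by rw [hwskew, hwxz]; simp
  have hwzy : w vz vy = 0 := by rw [hwskew, hwyz]; simp
  have wself : ∀ u : V3, w u u = 0 := by
    intro u
    have h := hwskew u u
    linear_combination h / 2
  have hw : ∀ u v : V3, w u v = u 0 * v 1 - u 1 * v 0 := by
    intro u v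
    have h1 : w u v = w (u 0 • vx + u 1 • vy + u 2 • vz) (v 0 • vx + v 1 • vy + v 2 • vz) := by
      rw [← decomp, ← decomp]
    rw [h1]
    simp only [map_add, map_smul, LinearMap.add_apply, LinearMap.smul_apply,
      hwxy, hwxz, hwyz, hwyx, hwzx, hwzy, wself, smul_eq_mul]
    ring
  -- sigma decomposition
  have hσd : ∀ (u : V3) (i : Fin 3),
      σ u i = u 0 * σ vx i + u 1 * σ vy i + u 2 * σ vz i := by
    intro u i
    conv_lhs => rw [decomp u]
    simp [map_add, map_smul]
  set A : V3 := σ vx with hA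
  set B : V3 := σ vy with hB
  set C : V3 := σ vz with hC
  -- equations from hσ vx vy
  have e1 := hσ vx vy
  rw [hxy, hb] at e1
  have hB0 : B 0 = 0 := by
    have := congrFun e1 0; simp only [← hA, ← hB, ← hC] at this; simpa [vy, vz, ← hB] using this
  have hB1eq : B 1 = A 0 * B 1 - A 1 * B 0 := by
    have := congrFun e1 1; simp only [← hA, ← hB, ← hC] at this; simpa [vy, vz, ← hB] using this
  -- equations from hσ vy vz
  have e2 := hσ vy vz
  rw [hyz, hb] at e2
  have hC0 : C 0 = 0 := by
    have := congrFun e2 0; simp only [← hA, ← hB, ← hC] at this; simpa [vy, vz, ← hC] using this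
  have hC1eq : C 1 = B 0 * C 1 - B 1 * C 0 := by
    have := congrFun e2 1; simp only [← hA, ← hB, ← hC] at this; simpa [vy, vz, ← hC] using this
  have hC2eq : C 2 = B 1 * C 2 - B 2 * C 1 := by
    have := congrFun e2 2; simp only [← hA, ← hB, ← hC] at this; simpa [vy, vz, ← hC] using this
  have hC1 : C 1 = 0 := by rw [hC1eq, hB0, hC0]; ring
  -- C 2 ≠ 0
  have hC2 : C 2 ≠ 0 := by
    intro h
    have hz : σ vz = 0 := by
      funext i; fin_cases i
      · exact hC0
      · exact hC1
      · exact h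
    have : vz = 0 := by
      have := σ.injective (hz.trans (map_zero σ).symm)
      exact this
    have := congrFun this 2
    simp [vz] at this
  have hB1 : B 1 = 1 := by
    have h := hC2eq
    rw [hC1] at h
    have : (B 1 - 1) * C 2 = 0 := by linear_combination -h
    rcases mul_eq_zero.mp this with h' | h'
    · linear_combination h'
    · exact absurd h' hC2
  have hA0 : A 0 = 1 := by
    have h := hB1eq
    rw [hB0, hB1] at h
    linear_combination -h
  -- final computation
  intro u v
  rw [hw, hw]
  rw [hσd u 0, hσd u 1, hσd v 0, hσd v 1]
  rw [hA0, hB0, hB1, hC0, hC1]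
  ring
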